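/- For the Poisson bracket on ℂ[x,y] defined by {x,y} = y (so {f,g} = y(∂f/∂x ∂g/∂y − ∂f/∂y ∂g/∂x)), the zeroth Poisson cohomology (the Casimirs) equals ℂ, and the first Poisson cohomology, i.e., Poisson vector fields modulo Hamiltonian vector fields, is one-dimensional, spanned by the class of ∂/∂x. -/

import Mathlib

noncomputable section

open MvPolynomial

abbrev R2 := MvPolynomial (Fin 2) ℂ

def Xv : R2 := X 0
def Yv : R2 := X 1

/-- The Poisson bracket `{f,g} = y(∂f/∂x ∂g/∂y − ∂f/∂y ∂g/∂x)` on `ℂ[x,y]`. -/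
def br (f g : R2) : R2 :=
  Yv * (pderiv 0 f * pderiv 1 g - pderiv 1 f * pderiv 0 g)

/-- `X = f∂/∂x + g∂/∂y` applied to a polynomial. -/
def vf (f g p : R2) : R2 := f * pderiv 0 p + g * pderiv 1 p

/-- `(f,g)` is a Poisson vector field for `π₁ = y ∂/∂x ∧ ∂/∂y`. -/
def IsPoissonVF (f g : R2) : Prop :=
  ∀ p q : R2, vf f g (br p q) = br (vf f g p) q + br p (vf f g q)

lemma fext {μ ν : Fin 2 →₀ ℕ} (h0 : μ 0 = ν 0) (h1 : μ 1 = ν 1) : μ = ν := by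
  ext j
  fin_cases j
  · exact h0
  · exact h1

lemma coeff_pderiv (i : Fin 2) (μ : Fin 2 →₀ ℕ) (p : R2) :
    coeff μ (pderiv i p) = ((μ i : ℂ) + 1) * coeff (μ + Finsupp.single i 1) p := by
  induction p using MvPolynomial.induction_on' with
  | monomial m c =>
    rw [pderiv_monomial, coeff_monomial, coeff_monomial]
    by_cases hm : m = μ + Finsupp.single i 1
    · have hmi : m i = μ i + 1 := by simp [hm]
      have : m - Finsupp.single i 1 = μ := by
        apply fext <;> simp [hm, Finsupp.sub_apply, Finsupp.add_apply, Finsupp.single_apply]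
      simp [this, hm, hmi]
      ring
    · rw [if_neg hm, mul_zero]
      by_cases hs : m - Finsupp.single i 1 = μ
      · rw [if_pos hs]
        rcases Nat.eq_zero_or_pos (m i) with h0 | h0
        · simp [h0]
        · exfalso
          apply hm
          have : m - Finsupp.single i 1 + Finsupp.single i 1 = m :=
            tsub_add_cancel_of_le (Finsupp.single_le_iff.2 h0)
          rw [← hs, this]
      · simp [hs]
  | add p q hp hq =>
    simp [hp, hq]
    ring

lemma pderiv_comm' (p : R2) : pderiv 1 (pderiv 0 p) = pderiv 0 (pderiv 1 p) := by
  ext μ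
  simp only [coeff_pderiv, Finsupp.add_apply, Finsupp.single_apply]
  norm_num
  rw [add_right_comm]
  ring

@[simp] lemma pd0Y : pderiv 0 Yv = (0 : R2) := by
  simp [Yv, pderiv_X_of_ne (by decide : (1:Fin 2) ≠ 0)]

@[simp] lemma pd1Y : pderiv 1 Yv = (1 : R2) := by simp [Yv]

lemma coeff_Y_mul (μ : Fin 2 →₀ ℕ) (p : R2) :
    coeff μ (Yv * p) = if μ 1 = 0 then 0 else coeff (μ - Finsupp.single 1 1) p := by
  rw [Yv, coeff_X_mul']
  by_cases h : μ 1 = 0 <;> simp [Finsupp.mem_support_iff, h]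

lemma Yv_ne : (Yv : R2) ≠ 0 := by simpa [Yv] using X_ne_zero (R := ℂ) (1 : Fin 2)

-- a polynomial with vanishing partials is constant
lemma const_of_pderiv {h : R2} (h0 : pderiv 0 h = 0) (h1 : pderiv 1 h = 0) :
    ∃ c : ℂ, h = C c := by
  refine ⟨coeff 0 h, ?_⟩
  ext μ
  rw [coeff_C]
  by_cases hμ : μ = 0
  · simp [hμ, eq_comm]
  · rw [if_neg (fun hc => hμ hc.symm)]
    have hne : μ 0 ≠ 0 ∨ μ 1 ≠ 0 := by
      by_contra hc
      push_neg at hc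
      exact hμ (fext hc.1 hc.2)
    rcases hne with hi | hi
    · have := coeff_pderiv 0 (μ - Finsupp.single 0 1) h
      rw [h0] at this
      have hsum : μ - Finsupp.single 0 1 + Finsupp.single 0 1 = μ :=
        tsub_add_cancel_of_le (Finsupp.single_le_iff.2 (by omega))
      rw [hsum] at this
      simp only [coeff_zero] at this
      exact (mul_eq_zero.1 this.symm).resolve_left (Nat.cast_add_one_ne_zero _)
    · have := coeff_pderiv 1 (μ - Finsupp.single 1 1) h
      rw [h1] at this
      have hsum : μ - Finsupp.single 1 1 + Finsupp.single 1 1 = μ :=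
        tsub_add_cancel_of_le (Finsupp.single_le_iff.2 (by omega))
      rw [hsum] at this
      simp only [coeff_zero] at this
      exact (mul_eq_zero.1 this.symm).resolve_left (Nat.cast_add_one_ne_zero _)

lemma casimir (h : R2) : (∀ f : R2, br h f = 0) ↔ ∃ c : ℂ, h = C c := by
  constructor
  · intro H
    have e1 : br h (X 1) = Yv * pderiv 0 h := by
      simp [br, pderiv_X_of_ne (by decide : (1:Fin 2) ≠ 0)]
    have e0 : br h (X 0) = -(Yv * pderiv 1 h) := by
      simp [br, pderiv_X_of_ne (by decide : (0:Fin 2) ≠ 1)]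
    have h1 : pderiv 0 h = 0 := by
      have := H (X 1); rw [e1] at this
      exact (mul_eq_zero.1 this).resolve_left Yv_ne
    have h2 : pderiv 1 h = 0 := by
      have := H (X 0); rw [e0, neg_eq_zero] at this
      exact (mul_eq_zero.1 this).resolve_left Yv_ne
    exact const_of_pderiv h1 h2
  · rintro ⟨c, rfl⟩ f
    simp [br]

lemma part3 : IsPoissonVF 1 0 := by
  intro p q
  simp only [vf, one_mul, zero_mul, add_zero, br]
  rw [Derivation.leibniz]
  simp only [pd0Y, smul_eq_mul, zero_mul, add_zero, mul_zero, zero_add]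
  rw [map_sub, pderiv_mul, pderiv_mul]
  rw [pderiv_comm' q, pderiv_comm' p]
  ring

lemma part4 : ¬ ∃ h : R2, (1 : R2) = - (Yv * pderiv 1 h) ∧ (0 : R2) = Yv * pderiv 0 h := by
  rintro ⟨h, h1, -⟩
  have := congrArg (coeff 0) h1
  simp [coeff_Y_mul] at this

local notation "e0" => Finsupp.single (0 : Fin 2) (1 : ℕ)
local notation "e1" => Finsupp.single (1 : Fin 2) (1 : ℕ)

lemma sapp (i j : Fin 2) : (Finsupp.single i (1:ℕ)) j = if i = j then 1 else 0 :=
  Finsupp.single_apply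

lemma part2 (f g : R2) (hp : IsPoissonVF f g) :
    ∃ (c : ℂ) (h : R2),
      f = C c + (- (Yv * pderiv 1 h)) ∧ g = Yv * pderiv 0 h := by
  -- the structure equation
  have cond : g = Yv * pderiv 0 f + Yv * pderiv 1 g := by
    have := hp (X 0) (X 1)
    simp only [br, vf, pderiv_X_self, pderiv_X_of_ne (by decide : (1:Fin 2) ≠ 0),
      pderiv_X_of_ne (by decide : (0:Fin 2) ≠ 1), pd0Y, pd1Y,
      mul_one, mul_zero, zero_mul, one_mul, sub_zero, zero_sub, add_zero, zero_add,
      mul_neg] at this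
    linear_combination this
  -- coefficient consequences
  have C1 : ∀ μ : Fin 2 →₀ ℕ, μ 1 = 0 → coeff μ g = 0 := by
    intro μ hμ
    rw [cond, coeff_add, coeff_Y_mul, coeff_Y_mul, if_pos hμ, if_pos hμ, add_zero]
  have C2 : ∀ μ : Fin 2 →₀ ℕ,
      ((μ 0 : ℂ) + 1) * coeff (μ + e0) f = -(μ 1 : ℂ) * coeff (μ + e1) g := by
    intro μ
    have hc := congrArg (coeff (μ + e1)) cond
    rw [coeff_add, coeff_Y_mul, coeff_Y_mul] at hc
    have h1 : (μ + e1) 1 ≠ 0 := by simp [Finsupp.add_apply, sapp]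
    rw [if_neg h1, if_neg h1, add_tsub_cancel_right, coeff_pderiv, coeff_pderiv] at hc
    linear_combination (-1 : ℂ) * hc
  -- the coefficients of the Hamiltonian potential
  set hco : (Fin 2 →₀ ℕ) → ℂ := fun μ =>
    if μ 0 = 0 then (if μ 1 = 0 then 0 else - coeff μ f / (μ 1 : ℂ))
    else coeff (μ - e0 + e1) g / (μ 0 : ℂ) with hhco
  set S : Finset (Fin 2 →₀ ℕ) :=
    f.support ∪ g.support.image (fun m => m + e0 - e1) with hS
  have hsupp : ∀ μ, μ ∉ S → hco μ = 0 := by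
    intro μ hμ
    rw [hS, Finset.mem_union, Finset.mem_image] at hμ
    push_neg at hμ
    obtain ⟨hf, hg⟩ := hμ
    rw [MvPolynomial.notMem_support_iff] at hf
    by_cases h0 : μ 0 = 0
    · simp [hhco, h0, hf]
    · rw [hhco]
      simp only [if_neg h0]
      have : coeff (μ - e0 + e1) g = 0 := by
        by_contra hne
        have hmem : (μ - e0 + e1) ∈ g.support := MvPolynomial.mem_support_iff.2 hne
        refine hg _ hmem ?_
        apply fext <;>
          simp [Finsupp.add_apply, Finsupp.tsub_apply, sapp] <;> omega
      simp [this]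
  set h : R2 := ∑ μ ∈ S, monomial μ (hco μ) with hh
  have coeff_h : ∀ μ, coeff μ h = hco μ := by
    intro μ
    rw [hh]
    rw [coeff_sum]
    simp only [coeff_monomial]
    rw [Finset.sum_ite_eq' S μ hco]
    by_cases hμ : μ ∈ S
    · rw [if_pos hμ]
    · rw [if_neg hμ, hsupp μ hμ]
  refine ⟨coeff 0 f, h, ?_, ?_⟩
  · -- f = C c - Yv * ∂1 h
    ext μ
    rw [coeff_add, coeff_C, coeff_neg, coeff_Y_mul]
    by_cases h1 : μ 1 = 0
    · rw [if_pos h1, neg_zero, add_zero]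
      by_cases h0 : μ 0 = 0
      · have : μ = 0 := fext (by simpa using h0) (by simpa using h1)
        rw [this]
        simp
      · rw [if_neg (by rintro rfl; simp at h0)]
        have hc2 := C2 (μ - e0)
        have hi : μ - e0 + e0 = μ :=
          tsub_add_cancel_of_le (Finsupp.single_le_iff.2 (by omega))
        have hj : (μ - e0) 1 = 0 := by
          rw [Finsupp.tsub_apply, sapp]; omega
        rw [hi, hj] at hc2
        simp only [Nat.cast_zero, neg_zero, zero_mul] at hc2
        exact (mul_eq_zero.1 hc2).resolve_left (Nat.cast_add_one_ne_zero _)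
    · rw [if_neg h1, if_neg (by rintro rfl; simp at h1)]
      rw [_root_.coeff_pderiv]
      have hi : μ - e1 + e1 = μ :=
        tsub_add_cancel_of_le (Finsupp.single_le_iff.2 (by omega))
      have hj : ((μ - e1) 1 : ℂ) + 1 = (μ 1 : ℂ) := by
        rw [Finsupp.tsub_apply, sapp]
        have : μ 1 - 1 + 1 = μ 1 := by omega
        simp only [if_pos rfl]
        exact_mod_cast congrArg (Nat.cast : ℕ → ℂ) this
      rw [hi, hj, coeff_h]
      simp only [hhco]
      by_cases h0 : μ 0 = 0
      · rw [if_pos h0, if_neg h1, zero_add]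
        have h1c : (μ 1 : ℂ) ≠ 0 := Nat.cast_ne_zero.2 h1
        field_simp
      · rw [if_neg h0, zero_add]
        have hc2 := C2 (μ - e0)
        have hi0 : μ - e0 + e0 = μ :=
          tsub_add_cancel_of_le (Finsupp.single_le_iff.2 (by omega))
        have hj0 : (((μ - e0) 0 : ℕ) : ℂ) + 1 = (μ 0 : ℂ) := by
          rw [Finsupp.tsub_apply, sapp]
          simp only [if_pos rfl]
          have : μ 0 - 1 + 1 = μ 0 := by omega
          exact_mod_cast congrArg (Nat.cast : ℕ → ℂ) this
        have hj1 : (μ - e0) 1 = μ 1 := by rw [Finsupp.tsub_apply, sapp]; simp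
        have hix : μ - e0 + e1 = μ - e0 + e1 := rfl
        rw [hi0, hj0, hj1] at hc2
        have hμ0 : (μ 0 : ℂ) ≠ 0 := Nat.cast_ne_zero.2 h0
        field_simp
        first
        | linear_combination -hc2
        | linear_combination 2*hc2
        | linear_combination hc2
        | linear_combination -2*hc2
    -- g = Yv * ∂0 h
  · ext μ
    rw [coeff_Y_mul]
    by_cases h1 : μ 1 = 0
    · rw [if_pos h1]
      exact C1 μ h1
    · rw [if_neg h1, _root_.coeff_pderiv, coeff_h]
      simp only [hhco]
      have hv0 : (μ - e1 + e0) 0 = μ 0 + 1 := by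
        simp [Finsupp.add_apply, Finsupp.tsub_apply, sapp]
      have hv : (μ - e1 + e0) - e0 + e1 = μ := by
        apply fext <;> simp [Finsupp.add_apply, Finsupp.tsub_apply, sapp] <;> omega
      rw [if_neg (by rw [hv0]; omega), hv, hv0]
      have hz : ((μ - e1) 0 : ℂ) + 1 = ((μ 0 : ℕ) : ℂ) + 1 := by
        rw [Finsupp.tsub_apply, sapp]; simp
      rw [hz]
      push_cast
      rw [mul_comm ((μ 0 : ℂ) + 1), div_mul_cancel₀ _ (Nat.cast_add_one_ne_zero (μ 0))]

/-- For `π₁ = y ∂/∂x ∧ ∂/∂y` on `ℂ[x,y]`: the Casimirs are exactly the constants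
(`H⁰ = ℂ`), and every Poisson vector field is a constant multiple of `∂/∂x` plus a
Hamiltonian vector field, with `∂/∂x` Poisson but not Hamiltonian (`H¹ = ℂ·[∂/∂x]`). -/
theorem stmt_8 :
    (∀ h : R2, (∀ f : R2, br h f = 0) ↔ ∃ c : ℂ, h = C c) ∧
    (∀ f g : R2, IsPoissonVF f g →
      ∃ (c : ℂ) (h : R2),
        f = C c + (- (Yv * pderiv 1 h)) ∧ g = Yv * pderiv 0 h) ∧
    IsPoissonVF 1 0 ∧
    ¬ ∃ h : R2, (1 : R2) = - (Yv * pderiv 1 h) ∧ (0 : R2) = Yv * pderiv 0 h := by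
  exact ⟨casimir, part2, part3, part4⟩

end
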